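/- Let F be a field, let n ≥ 1, t ≥ 2, σ ∈ {1,−1}, and let λB+A be an arbitrary pencil of size (t+1)n×(t+1)n over F. Let L(λ) be the associated modified block Kronecker pencil (of size 2tn×2tn). Then: (i) L(λ) is a linearization of the 2n×2n matrix polynomial P(λ) := (Λ̂_t(λ)^T⊗I_n)(λB+A)(Λ̂_t(λ)⊗I_n), i.e., there exist unimodular U(λ), V(λ) with U(λ)L(λ)V(λ) = diag(I_{(2t−2)n}, P(λ)); and (ii) rev_1 L(λ) is a linearization of the 2n×2n matrix polynomial P̃(λ) := (Λ̃_t(λ)^T⊗I_n)(λA+B)(Λ̃_t(λ)⊗I_n), i.e., there exist unimodular U′(λ), V′(λ) with U′(λ)(rev_1 L)(λ)V′(λ) = diag(I_{(2t−2)n}, P̃(λ)). -/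

import Mathlib

open Polynomial Matrix
open scoped Kronecker

noncomputable section

/-- Entrywise inclusion of a constant matrix into polynomial matrices. -/
def matC {F : Type} [Field F] {m l : Type*} (M : Matrix m l F) : Matrix m l (Polynomial F) :=
  M.map fun a => (C a : Polynomial F)

/-- The pencil `λ ↦ A + λ B`, represented as a matrix over `F[λ]`. -/
def pencil {F : Type} [Field F] {m l : Type*} (A B : Matrix m l F) :
    Matrix m l (Polynomial F) :=
  matC A + (X : Polynomial F) • matC B

/-- Grade-`g` reversal `rev_g`, applied entrywise. -/
def revMat {F : Type} [Field F] {m l : Type*} (g : ℕ) (M : Matrix m l (Polynomial F)) :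
    Matrix m l (Polynomial F) :=
  M.map fun q => q.reflect g

/-- Entrywise evaluation of a polynomial matrix at a point. -/
def evalMat {F : Type} [Field F] {m l : Type*} (a : F) (M : Matrix m l (Polynomial F)) :
    Matrix m l F :=
  M.map fun q => q.eval a

/-- The matrix polynomial `P(λ) = ∑_{k=0}^d λ^k P_k` built from its coefficients. -/
def polyOfCoeffs {F : Type} [Field F] {n : ℕ} (d : ℕ) (Pc : ℕ → Matrix (Fin n) (Fin n) F) :
    Matrix (Fin n) (Fin n) (Polynomial F) :=
  ∑ k ∈ Finset.range (d + 1), (X : Polynomial F) ^ k • matC (Pc k)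

/-- The `(i,j)` block of a block-partitioned matrix. -/
def blk {α p q n m : Type*} (A : Matrix (p × n) (q × m) α) (i : p) (j : q) :
    Matrix n m α :=
  Matrix.of fun r c => A (i, r) (j, c)

/-- `Λ_s(λ) ⊗ I_n`, an `(s+1)n × n` polynomial matrix whose `i`-th block is `λ^{s-i} I_n`. -/
def Lam (F : Type) [Field F] (s n : ℕ) :
    Matrix (Fin (s+1) × Fin n) (Fin n) (Polynomial F) :=
  Matrix.of fun p c => if p.2 = c then (X : Polynomial F) ^ (s - (p.1 : ℕ)) else 0

/-- The pencil `L_s(λ) ∈ F[λ]^{s×(s+1)}` with `-1` on the diagonal and `λ` on the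
superdiagonal. -/
def Lpen (F : Type) [Field F] (s : ℕ) : Matrix (Fin s) (Fin (s+1)) (Polynomial F) :=
  Matrix.of fun i j =>
    if (j : ℕ) = (i : ℕ) then -1 else if (j : ℕ) = (i : ℕ) + 1 then X else 0

/-- The block Kronecker pencil `[[λB+A, L_s(λ)ᵀ⊗I_n],[σ L_s(λ)⊗I_n, 0]]` associated with a
pencil `M = λB+A` of size `(s+1)n × (s+1)n`. -/
def blockKron (F : Type) [Field F] (s n : ℕ) (σ : F)
    (M : Matrix (Fin (s+1) × Fin n) (Fin (s+1) × Fin n) (Polynomial F)) :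
    Matrix ((Fin (s+1) × Fin n) ⊕ (Fin s × Fin n)) ((Fin (s+1) × Fin n) ⊕ (Fin s × Fin n))
      (Polynomial F) :=
  Matrix.fromBlocks M (Lpen F s ⊗ₖ (1 : Matrix (Fin n) (Fin n) (Polynomial F)))ᵀ
    (σ • (Lpen F s ⊗ₖ (1 : Matrix (Fin n) (Fin n) (Polynomial F)))) 0

/-- `L` is a linearization of `P`: there are unimodular `U`, `V` with
`U L V = diag(I_m, P)` (up to the fixed identification of index sets). -/
def IsLinearization {F : Type} [Field F] (m : ℕ) {ι ρ : Type*} [Fintype ι] [DecidableEq ι]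
    [Fintype ρ] [DecidableEq ρ] (L : Matrix ι ι (Polynomial F))
    (P : Matrix ρ ρ (Polynomial F)) : Prop :=
  ∃ (e : (Fin m ⊕ ρ) ≃ ι) (U V : Matrix ι ι (Polynomial F)),
    IsUnit U.det ∧ IsUnit V.det ∧
      U * L * V =
        (Matrix.fromBlocks (1 : Matrix (Fin m) (Fin m) (Polynomial F)) 0 0 P).submatrix
          e.symm e.symm

/-- The block conditions `∑_{i+j=d+2-k} B_{ij} + ∑_{i+j=d+1-k} A_{ij} = P_k` for
`k = 0,…,d` (blocks are indexed here `0`-based, so `i+j` `1`-based is `i+j+2` `0`-based). -/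
def blockConds {F : Type} [Field F] {s n : ℕ} (d : ℕ) (Pc : ℕ → Matrix (Fin n) (Fin n) F)
    (A B : Matrix (Fin (s+1) × Fin n) (Fin (s+1) × Fin n) F) : Prop :=
  ∀ k, k ≤ d →
    (∑ p ∈ Finset.univ.filter
        (fun p : Fin (s+1) × Fin (s+1) => (p.1 : ℕ) + (p.2 : ℕ) + 2 + k = d + 2),
        blk B p.1 p.2) +
      (∑ p ∈ Finset.univ.filter
        (fun p : Fin (s+1) × Fin (s+1) => (p.1 : ℕ) + (p.2 : ℕ) + 2 + k = d + 1),
        blk A p.1 p.2) = Pc k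

/-- `L̂_t(λ) ⊗ I_n` (with `t = u+1`): first block column zero, remaining block columns
`L_{t-1}(λ) ⊗ I_n`; the column index is split as `Fin n ⊕ (Fin t × Fin n)`. -/
def LhatB (F : Type) [Field F] (u n : ℕ) :
    Matrix (Fin u × Fin n) (Fin n ⊕ Fin (u+1) × Fin n) (Polynomial F) :=
  Matrix.of fun p q =>
    match q with
    | Sum.inl _ => 0
    | Sum.inr c => (Lpen F u ⊗ₖ (1 : Matrix (Fin n) (Fin n) (Polynomial F))) p c

/-- The modified block Kronecker pencil `[[λB+A, L̂_t(λ)ᵀ⊗I_n],[σ L̂_t(λ)⊗I_n, 0]]`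
(with `t = u+1`). -/
def modBK (F : Type) [Field F] (u n : ℕ) (σ : F)
    (M : Matrix (Fin n ⊕ Fin (u+1) × Fin n) (Fin n ⊕ Fin (u+1) × Fin n) (Polynomial F)) :
    Matrix ((Fin n ⊕ Fin (u+1) × Fin n) ⊕ Fin u × Fin n)
      ((Fin n ⊕ Fin (u+1) × Fin n) ⊕ Fin u × Fin n) (Polynomial F) :=
  Matrix.fromBlocks M (LhatB F u n)ᵀ (σ • LhatB F u n) 0

/-- `Λ̂_t(λ) ⊗ I_n` (with `t = u+1`): the `(t+1)n × 2n` polynomial matrix whose transpose has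
block rows `(I_n, 0, …, 0)` and `(0, λ^{t-1}I_n, …, λ I_n, I_n)`. -/
def LamHatB (F : Type) [Field F] (u n : ℕ) :
    Matrix (Fin n ⊕ Fin (u+1) × Fin n) (Fin 2 × Fin n) (Polynomial F) :=
  Matrix.of fun q c =>
    match q with
    | Sum.inl r => if c.1 = 0 ∧ c.2 = r then 1 else 0
    | Sum.inr p => if c.1 = 1 ∧ c.2 = p.2 then (X : Polynomial F) ^ (u - (p.1 : ℕ)) else 0

/-- `Λ̃_t(λ) ⊗ I_n` (with `t = u+1`): the `(t+1)n × 2n` polynomial matrix whose transpose has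
block rows `(I_n, 0, …, 0)` and `(0, I_n, λ I_n, …, λ^{t-1} I_n)`. -/
def LamTildeB (F : Type) [Field F] (u n : ℕ) :
    Matrix (Fin n ⊕ Fin (u+1) × Fin n) (Fin 2 × Fin n) (Polynomial F) :=
  Matrix.of fun q c =>
    match q with
    | Sum.inl r => if c.1 = 0 ∧ c.2 = r then 1 else 0
    | Sum.inr p => if c.1 = 1 ∧ c.2 = p.2 then (X : Polynomial F) ^ (p.1 : ℕ) else 0

/-- A `2n × 2n` matrix assembled from four `n × n` blocks, indexed by `Fin 2 × Fin n`. -/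
def twoBlock {α : Type*} {n : ℕ} (W₁₁ W₁₂ W₂₁ W₂₂ : Matrix (Fin n) (Fin n) α) :
    Matrix (Fin 2 × Fin n) (Fin 2 × Fin n) α :=
  Matrix.of fun p q =>
    if p.1 = 0 then (if q.1 = 0 then W₁₁ p.2 q.2 else W₁₂ p.2 q.2)
    else (if q.1 = 0 then W₂₁ p.2 q.2 else W₂₂ p.2 q.2)

/-- `Λ_t(λ) ⊗ I_n` (with `t = u+1`), over the split row index `Fin n ⊕ (Fin t × Fin n)`:
block entries `λ^t I_n, λ^{t-1} I_n, …, λ I_n, I_n`. -/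
def LamFullB (F : Type) [Field F] (u n : ℕ) :
    Matrix (Fin n ⊕ Fin (u+1) × Fin n) (Fin n) (Polynomial F) :=
  Matrix.of fun q c =>
    match q with
    | Sum.inl r => if r = c then (X : Polynomial F) ^ (u + 1) else 0
    | Sum.inr p => if p.2 = c then (X : Polynomial F) ^ (u - (p.1 : ℕ)) else 0

/-- `N̂_t(λ) = Ĥ_t(λ) ⊗ I_n` (with `t = u+1`): `Ĥ_t ∈ F[λ]^{(t-1)×(t+1)}` has `(i,j)` entry
`λ^{i+1-j}` if `2 ≤ j ≤ i+1` and `0` otherwise. -/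
def NhatB (F : Type) [Field F] (u n : ℕ) :
    Matrix (Fin u × Fin n) (Fin n ⊕ Fin (u+1) × Fin n) (Polynomial F) :=
  Matrix.of fun p q =>
    match q with
    | Sum.inl _ => 0
    | Sum.inr c =>
        if (c.1 : ℕ) ≤ (p.1 : ℕ) ∧ p.2 = c.2 then
          (X : Polynomial F) ^ ((p.1 : ℕ) - (c.1 : ℕ)) else 0

end
noncomputable section AuxLin
open Polynomial Matrix
open scoped Kronecker

variable {F : Type} [Field F] {n u : ℕ}

private lemma sum_two_support {β : Type*} [AddCommMonoid β] {m : ℕ} (f : Fin m → β) (a b : Fin m)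
    (hab : a ≠ b) (h : ∀ j, j ≠ a → j ≠ b → f j = 0) :
    ∑ j, f j = f a + f b := by
  rw [← Finset.sum_pair hab]
  refine (Finset.sum_subset (Finset.subset_univ _) fun j _ hj => ?_).symm
  simp only [Finset.mem_insert, Finset.mem_singleton, not_or] at hj
  exact h j hj.1 hj.2

/-- small auxiliary matrices (the `n`-free factors of the Kronecker blocks) -/
private def lamh (F : Type) [Field F] (u : ℕ) : Matrix (Fin (u+1)) (Fin 2) F[X] :=
  Matrix.of fun j d => if d = 1 then (X : F[X]) ^ (u - (j : ℕ)) else 0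

private def lamt (F : Type) [Field F] (u : ℕ) : Matrix (Fin (u+1)) (Fin 2) F[X] :=
  Matrix.of fun j d => if d = 1 then (X : F[X]) ^ ((j : ℕ)) else 0

private def nhS (F : Type) [Field F] (u : ℕ) : Matrix (Fin u) (Fin (u+1)) F[X] :=
  Matrix.of fun k j => if (j : ℕ) ≤ (k : ℕ) then (X : F[X]) ^ ((k : ℕ) - (j : ℕ)) else 0

private def ntS (F : Type) [Field F] (u : ℕ) : Matrix (Fin u) (Fin (u+1)) F[X] :=
  Matrix.of fun k j => if (k : ℕ) + 1 ≤ (j : ℕ) then (X : F[X]) ^ ((j : ℕ) - (k : ℕ) - 1) else 0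

private def jb1S (F : Type) [Field F] (u : ℕ) : Matrix (Fin (u+1)) (Fin 2) F[X] :=
  Matrix.of fun i d => if d = 1 ∧ (i : ℕ) = u then 1 else 0

private def jb2S (F : Type) [Field F] (u : ℕ) : Matrix (Fin (u+1)) (Fin u) F[X] :=
  Matrix.of fun i k =>
    if (i : ℕ) = (k : ℕ) then 1 else if (i : ℕ) = (k : ℕ) + 1 then -X else 0

private def jt1S (F : Type) [Field F] (u : ℕ) : Matrix (Fin (u+1)) (Fin 2) F[X] :=
  Matrix.of fun i d => if d = 1 ∧ (i : ℕ) = 0 then 1 else 0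

private def jt2S (F : Type) [Field F] (u : ℕ) : Matrix (Fin (u+1)) (Fin u) F[X] :=
  Matrix.of fun i k =>
    if (i : ℕ) = (k : ℕ) + 1 then 1 else if (i : ℕ) = (k : ℕ) then -X else 0

private def e00S (F : Type) [Field F] : Matrix (Fin 2) (Fin 2) F[X] :=
  Matrix.of fun a b => if a = 0 ∧ b = 0 then 1 else 0

private def TS (F : Type) [Field F] (n : ℕ) : Matrix (Fin n) (Fin 2 × Fin n) F[X] :=
  Matrix.of fun r c => if c.1 = 0 ∧ c.2 = r then 1 else 0

/-- the reversed pencil matrices -/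
private def LpenR (F : Type) [Field F] (s : ℕ) : Matrix (Fin s) (Fin (s+1)) F[X] :=
  Matrix.of fun i j =>
    if (j : ℕ) = (i : ℕ) then -X else if (j : ℕ) = (i : ℕ) + 1 then 1 else 0

private def LhatRevB (F : Type) [Field F] (u n : ℕ) :
    Matrix (Fin u × Fin n) (Fin n ⊕ Fin (u+1) × Fin n) F[X] :=
  Matrix.fromCols 0 (LpenR F u ⊗ₖ (1 : Matrix (Fin n) (Fin n) F[X]))

private def NtildeB (F : Type) [Field F] (u n : ℕ) :
    Matrix (Fin u × Fin n) (Fin n ⊕ Fin (u+1) × Fin n) F[X] :=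
  Matrix.fromCols 0 (ntS F u ⊗ₖ (1 : Matrix (Fin n) (Fin n) F[X]))

private def JhatB (F : Type) [Field F] (u n : ℕ) :
    Matrix (Fin n ⊕ Fin (u+1) × Fin n) ((Fin 2 × Fin n) ⊕ Fin u × Fin n) F[X] :=
  Matrix.fromRows (Matrix.fromCols (TS F n) 0)
    (Matrix.fromCols (jb1S F u ⊗ₖ (1 : Matrix (Fin n) (Fin n) F[X]))
      (jb2S F u ⊗ₖ (1 : Matrix (Fin n) (Fin n) F[X])))

private def JtildeB (F : Type) [Field F] (u n : ℕ) :
    Matrix (Fin n ⊕ Fin (u+1) × Fin n) ((Fin 2 × Fin n) ⊕ Fin u × Fin n) F[X] :=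
  Matrix.fromRows (Matrix.fromCols (TS F n) 0)
    (Matrix.fromCols (jt1S F u ⊗ₖ (1 : Matrix (Fin n) (Fin n) F[X]))
      (jt2S F u ⊗ₖ (1 : Matrix (Fin n) (Fin n) F[X])))

/-! ### small (n-free) identities -/

private lemma small_a : Lpen F u * lamh F u = 0 := by
  ext i d
  rw [Matrix.mul_apply, Matrix.zero_apply,
    sum_two_support _ i.castSucc i.succ (Fin.castSucc_lt_succ (i := i)).ne
      (fun j h1 h2 => by
        have n1 : ¬((j : ℕ) = (i : ℕ)) := fun h => h1 (by apply Fin.ext; simpa using h)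
        have n2 : ¬((j : ℕ) = (i : ℕ) + 1) := fun h => h2 (by apply Fin.ext; simpa using h)
        simp [Lpen, n1, n2])]
  have hpow : (X : F[X]) * X ^ (u - ((i : ℕ) + 1)) = X ^ (u - (i : ℕ)) := by
    rw [← pow_succ']
    congr 1
    have := i.isLt
    omega
  by_cases hd : d = 1
  · simp [Lpen, lamh, hd, (show (i : ℕ) + 1 ≠ (i : ℕ) by omega), hpow]
  · simp [Lpen, lamh, hd]

private lemma small_b : Lpen F u * (nhS F u)ᵀ = -1 := by
  ext i k
  rw [Matrix.mul_apply,
    sum_two_support _ i.castSucc i.succ (Fin.castSucc_lt_succ (i := i)).ne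
      (fun j h1 h2 => by
        have n1 : ¬((j : ℕ) = (i : ℕ)) := fun h => h1 (by apply Fin.ext; simpa using h)
        have n2 : ¬((j : ℕ) = (i : ℕ) + 1) := fun h => h2 (by apply Fin.ext; simpa using h)
        simp [Lpen, n1, n2])]
  rcases lt_trichotomy ((i : ℕ)) ((k : ℕ)) with hlt | heq | hgt
  · have hpow : (X : F[X]) * X ^ ((k : ℕ) - ((i : ℕ) + 1)) = X ^ ((k : ℕ) - (i : ℕ)) := by
      rw [← pow_succ']; congr 1; omega
    have hik : i ≠ k := fun h => by rw [h] at hlt; omega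
    simp [Lpen, nhS, Matrix.one_apply, hik,
      (show (i : ℕ) ≤ (k : ℕ) by omega), (show (i : ℕ) + 1 ≤ (k : ℕ) by omega),
      (show (i : ℕ) + 1 ≠ (i : ℕ) by omega), hpow]
  · have hik : i = k := Fin.ext heq
    subst hik
    simp [Lpen, nhS, Matrix.one_apply,
      (show ¬((i : ℕ) + 1 ≤ (i : ℕ)) by omega), (show (i : ℕ) + 1 ≠ (i : ℕ) by omega)]
  · have hik : i ≠ k := fun h => by rw [h] at hgt; omega
    simp [Lpen, nhS, Matrix.one_apply, hik,
      (show ¬((i : ℕ) ≤ (k : ℕ)) by omega), (show ¬((i : ℕ) + 1 ≤ (k : ℕ)) by omega),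
      (show (i : ℕ) + 1 ≠ (i : ℕ) by omega)]

private lemma small_c : (lamh F u)ᵀ * jb2S F u = 0 := by
  ext d k
  rw [Matrix.mul_apply, Matrix.zero_apply,
    sum_two_support _ k.castSucc k.succ (Fin.castSucc_lt_succ (i := k)).ne
      (fun j h1 h2 => by
        have n1 : ¬((j : ℕ) = (k : ℕ)) := fun h => h1 (by apply Fin.ext; simpa using h)
        have n2 : ¬((j : ℕ) = (k : ℕ) + 1) := fun h => h2 (by apply Fin.ext; simpa using h)
        simp [jb2S, n1, n2])]
  by_cases hd : d = 1
  · have hpow : (X : F[X]) ^ (u - ((k : ℕ) + 1)) * X = X ^ (u - (k : ℕ)) := by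
      rw [← pow_succ]; congr 1
      have := k.isLt
      omega
    simp [lamh, jb2S, hd, (show (k : ℕ) + 1 ≠ (k : ℕ) by omega), mul_neg, hpow]
  · simp [lamh, jb2S, hd]

private lemma small_d : nhS F u * jb1S F u = 0 := by
  apply Matrix.ext; intro k d
  rw [Matrix.mul_apply, Matrix.zero_apply]
  apply Finset.sum_eq_zero
  intro j _
  by_cases hj : (j : ℕ) = u
  · simp [nhS, jb1S, hj, (show ¬(u ≤ (k : ℕ)) by have := k.isLt; omega)]
  · simp [nhS, jb1S, hj]

private lemma small_e : nhS F u * jb2S F u = 1 := by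
  ext k k'
  rw [Matrix.mul_apply,
    sum_two_support _ k'.castSucc k'.succ (Fin.castSucc_lt_succ (i := k')).ne
      (fun j h1 h2 => by
        have n1 : ¬((j : ℕ) = (k' : ℕ)) := fun h => h1 (by apply Fin.ext; simpa using h)
        have n2 : ¬((j : ℕ) = (k' : ℕ) + 1) := fun h => h2 (by apply Fin.ext; simpa using h)
        simp [jb2S, n1, n2])]
  rcases lt_trichotomy ((k' : ℕ)) ((k : ℕ)) with hlt | heq | hgt
  · have hpow : (X : F[X]) ^ ((k : ℕ) - ((k' : ℕ) + 1)) * X = X ^ ((k : ℕ) - (k' : ℕ)) := by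
      rw [← pow_succ]; congr 1; omega
    have hik : k ≠ k' := fun h => by rw [h] at hlt; omega
    simp [nhS, jb2S, Matrix.one_apply, hik,
      (show (k' : ℕ) ≤ (k : ℕ) by omega), (show (k' : ℕ) + 1 ≤ (k : ℕ) by omega),
      (show (k' : ℕ) + 1 ≠ (k' : ℕ) by omega), mul_neg, hpow]
  · have hik : k' = k := Fin.ext heq
    subst hik
    simp [nhS, jb2S, Matrix.one_apply,
      (show ¬((k' : ℕ) + 1 ≤ (k' : ℕ)) by omega), (show (k' : ℕ) + 1 ≠ (k' : ℕ) by omega)]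
  · have hik : k ≠ k' := fun h => by rw [h] at hgt; omega
    simp [nhS, jb2S, Matrix.one_apply, hik,
      (show ¬((k' : ℕ) ≤ (k : ℕ)) by omega), (show ¬((k' : ℕ) + 1 ≤ (k : ℕ)) by omega),
      (show (k' : ℕ) + 1 ≠ (k' : ℕ) by omega)]

private lemma small_f : e00S F + (lamh F u)ᵀ * jb1S F u = 1 := by
  ext d d'
  rw [Matrix.add_apply, Matrix.mul_apply,
    Finset.sum_eq_single (Fin.last u)
      (fun j _ hj => by
        have : ¬((j : ℕ) = u) := fun h => hj (by apply Fin.ext; simpa using h)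
        simp [jb1S, this])
      (by simp)]
  fin_cases d <;> fin_cases d' <;>
    simp [e00S, lamh, jb1S, Matrix.one_apply, Fin.val_last]

private lemma small_a' : LpenR F u * lamt F u = 0 := by
  ext i d
  rw [Matrix.mul_apply, Matrix.zero_apply,
    sum_two_support _ i.castSucc i.succ (Fin.castSucc_lt_succ (i := i)).ne
      (fun j h1 h2 => by
        have n1 : ¬((j : ℕ) = (i : ℕ)) := fun h => h1 (by apply Fin.ext; simpa using h)
        have n2 : ¬((j : ℕ) = (i : ℕ) + 1) := fun h => h2 (by apply Fin.ext; simpa using h)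
        simp [LpenR, n1, n2])]
  by_cases hd : d = 1
  · simp [LpenR, lamt, hd, (show (i : ℕ) + 1 ≠ (i : ℕ) by omega), pow_succ']
  · simp [LpenR, lamt, hd]

private lemma small_b' : LpenR F u * (ntS F u)ᵀ = 1 := by
  ext i k
  rw [Matrix.mul_apply,
    sum_two_support _ i.castSucc i.succ (Fin.castSucc_lt_succ (i := i)).ne
      (fun j h1 h2 => by
        have n1 : ¬((j : ℕ) = (i : ℕ)) := fun h => h1 (by apply Fin.ext; simpa using h)
        have n2 : ¬((j : ℕ) = (i : ℕ) + 1) := fun h => h2 (by apply Fin.ext; simpa using h)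
        simp [LpenR, n1, n2])]
  rcases lt_trichotomy ((k : ℕ)) ((i : ℕ)) with hlt | heq | hgt
  · have hpow : (X : F[X]) * X ^ ((i : ℕ) - (k : ℕ) - 1) = X ^ ((i : ℕ) + 1 - (k : ℕ) - 1) := by
      rw [← pow_succ']; congr 1; omega
    have hik : i ≠ k := fun h => by rw [h] at hlt; omega
    simp [LpenR, ntS, Matrix.one_apply, hik, (show k < i from hlt), (show k ≤ i from Fin.le_of_lt hlt),
      (show (k : ℕ) + 1 ≤ (i : ℕ) by omega), (show (k : ℕ) + 1 ≤ (i : ℕ) + 1 by omega),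
      (show (i : ℕ) + 1 ≠ (i : ℕ) by omega), hpow]
  · have hik : k = i := Fin.ext heq
    subst hik
    simp [LpenR, ntS, Matrix.one_apply,
      (show ¬((k : ℕ) + 1 ≤ (k : ℕ)) by omega), (show (k : ℕ) + 1 ≠ (k : ℕ) by omega),
      (show (k : ℕ) + 1 - (k : ℕ) - 1 = 0 by omega)]
  · have hik : i ≠ k := fun h => by rw [h] at hgt; omega
    simp [LpenR, ntS, Matrix.one_apply, hik, (show ¬(k < i) from fun h => absurd (show (k : ℕ) < i from h) (by omega)), (show ¬(k ≤ i) from fun h => absurd (show (k : ℕ) ≤ i from h) (by omega)),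
      (show ¬((k : ℕ) + 1 ≤ (i : ℕ)) by omega), (show ¬((k : ℕ) + 1 ≤ (i : ℕ) + 1) by omega),
      (show (i : ℕ) + 1 ≠ (i : ℕ) by omega)]

private lemma small_c' : (lamt F u)ᵀ * jt2S F u = 0 := by
  ext d k
  rw [Matrix.mul_apply, Matrix.zero_apply,
    sum_two_support _ k.castSucc k.succ (Fin.castSucc_lt_succ (i := k)).ne
      (fun j h1 h2 => by
        have n1 : ¬((j : ℕ) = (k : ℕ)) := fun h => h1 (by apply Fin.ext; simpa using h)
        have n2 : ¬((j : ℕ) = (k : ℕ) + 1) := fun h => h2 (by apply Fin.ext; simpa using h)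
        simp [jt2S, n1, n2])]
  by_cases hd : d = 1
  · simp [lamt, jt2S, hd, (show (k : ℕ) ≠ (k : ℕ) + 1 by omega), mul_neg, pow_succ]
  · simp [lamt, jt2S, hd]

private lemma small_d' : ntS F u * jt1S F u = 0 := by
  apply Matrix.ext; intro k d
  rw [Matrix.mul_apply, Matrix.zero_apply]
  apply Finset.sum_eq_zero
  intro j _
  by_cases hj : (j : ℕ) = 0
  · simp [ntS, jt1S, hj, (show ¬((k : ℕ) + 1 ≤ 0) by omega)]
  · simp [ntS, jt1S, hj, (show j ≠ 0 by rintro rfl; exact hj rfl)]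

private lemma small_e' : ntS F u * jt2S F u = 1 := by
  ext k k'
  rw [Matrix.mul_apply,
    sum_two_support _ k'.castSucc k'.succ (Fin.castSucc_lt_succ (i := k')).ne
      (fun j h1 h2 => by
        have n1 : ¬((j : ℕ) = (k' : ℕ)) := fun h => h1 (by apply Fin.ext; simpa using h)
        have n2 : ¬((j : ℕ) = (k' : ℕ) + 1) := fun h => h2 (by apply Fin.ext; simpa using h)
        simp [jt2S, n1, n2])]
  rcases lt_trichotomy ((k : ℕ)) ((k' : ℕ)) with hlt | heq | hgt
  · have hpow : (X : F[X]) ^ ((k' : ℕ) - (k : ℕ) - 1) * X = X ^ ((k' : ℕ) + 1 - (k : ℕ) - 1) := by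
      rw [← pow_succ]; congr 1; omega
    have hik : k ≠ k' := fun h => by rw [h] at hlt; omega
    simp [ntS, jt2S, Matrix.one_apply, hik, (show k < k' from hlt), (show k ≤ k' from Fin.le_of_lt hlt),
      (show (k : ℕ) + 1 ≤ (k' : ℕ) by omega), (show (k : ℕ) + 1 ≤ (k' : ℕ) + 1 by omega),
      (show (k' : ℕ) ≠ (k' : ℕ) + 1 by omega), mul_neg, hpow]
  · have hik : k = k' := Fin.ext heq
    subst hik
    simp [ntS, jt2S, Matrix.one_apply,
      (show ¬((k : ℕ) + 1 ≤ (k : ℕ)) by omega), (show (k : ℕ) ≠ (k : ℕ) + 1 by omega),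
      (show (k : ℕ) + 1 - (k : ℕ) - 1 = 0 by omega)]
  · have hik : k ≠ k' := fun h => by rw [h] at hgt; omega
    simp [ntS, jt2S, Matrix.one_apply, hik, (show ¬(k < k') from fun h => absurd (show (k : ℕ) < k' from h) (by omega)), (show ¬(k ≤ k') from fun h => absurd (show (k : ℕ) ≤ k' from h) (by omega)),
      (show ¬((k : ℕ) + 1 ≤ (k' : ℕ)) by omega), (show ¬((k : ℕ) + 1 ≤ (k' : ℕ) + 1) by omega),
      (show (k' : ℕ) ≠ (k' : ℕ) + 1 by omega)]

private lemma small_f' : e00S F + (lamt F u)ᵀ * jt1S F u = 1 := by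
  ext d d'
  rw [Matrix.add_apply, Matrix.mul_apply,
    Finset.sum_eq_single (0 : Fin (u+1))
      (fun j _ hj => by
        have : ¬((j : ℕ) = 0) := fun h => hj (by apply Fin.ext; simpa using h)
        simp [jt1S, this, hj])
      (by simp)]
  fin_cases d <;> fin_cases d' <;>
    simp [e00S, lamt, jt1S, Matrix.one_apply]

end AuxLin
noncomputable section AuxLin2
open Polynomial Matrix
open scoped Kronecker

variable {F : Type} [Field F] {n u : ℕ}

/-! ### block decompositions of the given matrices -/

private lemma LhatB_eq :
    LhatB F u n = Matrix.fromCols 0 (Lpen F u ⊗ₖ (1 : Matrix (Fin n) (Fin n) F[X])) := by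
  ext p q
  cases q <;> simp [LhatB]

private lemma LamHatB_eq :
    LamHatB F u n =
      Matrix.fromRows (TS F n) (lamh F u ⊗ₖ (1 : Matrix (Fin n) (Fin n) F[X])) := by
  ext q c
  rcases q with r | ⟨p1, p2⟩
  · simp [LamHatB, TS]
  · rcases c with ⟨c1, c2⟩
    by_cases h2 : c2 = p2
    · subst h2
      by_cases h1 : c1 = 1 <;>
        simp [LamHatB, lamh, Matrix.one_apply, h1]
    · simp [LamHatB, lamh, Matrix.one_apply, h2, Ne.symm h2]

private lemma LamTildeB_eq :
    LamTildeB F u n =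
      Matrix.fromRows (TS F n) (lamt F u ⊗ₖ (1 : Matrix (Fin n) (Fin n) F[X])) := by
  ext q c
  rcases q with r | ⟨p1, p2⟩
  · simp [LamTildeB, TS]
  · rcases c with ⟨c1, c2⟩
    by_cases h2 : c2 = p2
    · subst h2
      by_cases h1 : c1 = 1 <;>
        simp [LamTildeB, lamt, Matrix.one_apply, h1]
    · simp [LamTildeB, lamt, Matrix.one_apply, h2, Ne.symm h2]

private lemma NhatB_eq :
    NhatB F u n = Matrix.fromCols 0 (nhS F u ⊗ₖ (1 : Matrix (Fin n) (Fin n) F[X])) := by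
  ext ⟨p1, p2⟩ q
  rcases q with r | ⟨c1, c2⟩
  · simp [NhatB]
  · by_cases h2 : p2 = c2
    · subst h2
      by_cases h1 : (c1 : ℕ) ≤ (p1 : ℕ) <;>
        simp [NhatB, nhS, Matrix.one_apply, h1]
    · simp [NhatB, nhS, Matrix.one_apply, h2]

/-- the reversed first pencil matrix -/
private lemma JhatB_blocks :
    JhatB F u n = Matrix.fromBlocks (TS F n) 0
      (jb1S F u ⊗ₖ (1 : Matrix (Fin n) (Fin n) F[X]))
      (jb2S F u ⊗ₖ (1 : Matrix (Fin n) (Fin n) F[X])) := by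
  rw [JhatB, ← Matrix.fromRows_fromCols_eq_fromBlocks]

private lemma JtildeB_blocks :
    JtildeB F u n = Matrix.fromBlocks (TS F n) 0
      (jt1S F u ⊗ₖ (1 : Matrix (Fin n) (Fin n) F[X]))
      (jt2S F u ⊗ₖ (1 : Matrix (Fin n) (Fin n) F[X])) := by
  rw [JtildeB, ← Matrix.fromRows_fromCols_eq_fromBlocks]

private lemma TS_tp_mul :
    (TS F n)ᵀ * TS F n = e00S F ⊗ₖ (1 : Matrix (Fin n) (Fin n) F[X]) := by
  ext ⟨a, r⟩ ⟨b, s⟩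
  rw [Matrix.mul_apply,
    Finset.sum_eq_single r
      (fun w _ hw => by simp [TS, (show ¬(r = w) from fun h => hw h.symm)])
      (by simp)]
  rcases eq_or_ne s r with hrs | hrs
  · subst hrs
    by_cases ha : a = 0 <;> by_cases hb : b = 0 <;>
      simp [TS, e00S, Matrix.one_apply, ha, hb]
  · by_cases ha : a = 0 <;> by_cases hb : b = 0 <;>
      simp [TS, e00S, Matrix.one_apply, ha, hb, hrs, Ne.symm hrs]

private lemma neg_one_kron :
    ((-1 : Matrix (Fin u) (Fin u) F[X]) ⊗ₖ (1 : Matrix (Fin n) (Fin n) F[X])) =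
      (-1 : F) • (1 : Matrix (Fin u × Fin n) (Fin u × Fin n) F[X]) := by
  ext ⟨i, r⟩ ⟨k, s⟩
  by_cases h1 : i = k <;> by_cases h2 : r = s <;>
    simp [Matrix.one_apply, Matrix.smul_apply, Prod.ext_iff, h1, h2]

/-! ### the three hypotheses of the key lemma, hat version -/

private lemma hEL_hat : LhatB F u n * LamHatB F u n = 0 := by
  rw [LhatB_eq, LamHatB_eq, Matrix.fromCols_mul_fromRows, Matrix.zero_mul, zero_add,
    ← Matrix.mul_kronecker_mul, small_a, Matrix.zero_kronecker]

private lemma hEN_hat : LhatB F u n * (NhatB F u n)ᵀ = (-1 : F) • 1 := by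
  rw [LhatB_eq, NhatB_eq, Matrix.transpose_fromCols, Matrix.fromCols_mul_fromRows,
    Matrix.transpose_zero, Matrix.zero_mul, zero_add, ← Matrix.kroneckerMap_transpose,
    Matrix.transpose_one, ← Matrix.mul_kronecker_mul, small_b, Matrix.mul_one, neg_one_kron]

private lemma hKJ_hat :
    Matrix.fromRows (LamHatB F u n)ᵀ (NhatB F u n) * JhatB F u n = 1 := by
  rw [LamHatB_eq, NhatB_eq, JhatB_blocks, Matrix.transpose_fromRows,
    ← Matrix.kroneckerMap_transpose, Matrix.transpose_one,
    Matrix.fromRows_fromCols_eq_fromBlocks, Matrix.fromBlocks_multiply]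
  simp only [← Matrix.mul_kronecker_mul, Matrix.mul_one, Matrix.mul_zero, Matrix.zero_mul,
    add_zero, zero_add, small_c, small_d, small_e, Matrix.zero_kronecker,
    Matrix.one_kronecker_one, TS_tp_mul]
  rw [← Matrix.add_kronecker, small_f, Matrix.one_kronecker_one, Matrix.fromBlocks_one]

/-! ### tilde versions -/

private lemma hEL_tilde : LhatRevB F u n * LamTildeB F u n = 0 := by
  rw [LhatRevB, LamTildeB_eq, Matrix.fromCols_mul_fromRows, Matrix.zero_mul, zero_add,
    ← Matrix.mul_kronecker_mul, small_a', Matrix.zero_kronecker]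

private lemma hEN_tilde : LhatRevB F u n * (NtildeB F u n)ᵀ = (1 : F) • 1 := by
  rw [LhatRevB, NtildeB, Matrix.transpose_fromCols, Matrix.fromCols_mul_fromRows,
    Matrix.transpose_zero, Matrix.zero_mul, zero_add, ← Matrix.kroneckerMap_transpose,
    Matrix.transpose_one, ← Matrix.mul_kronecker_mul, small_b', Matrix.mul_one,
    Matrix.one_kronecker_one, one_smul]

private lemma hKJ_tilde :
    Matrix.fromRows (LamTildeB F u n)ᵀ (NtildeB F u n) * JtildeB F u n = 1 := by
  rw [LamTildeB_eq, NtildeB, JtildeB_blocks, Matrix.transpose_fromRows,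
    ← Matrix.kroneckerMap_transpose, Matrix.transpose_one,
    Matrix.fromRows_fromCols_eq_fromBlocks, Matrix.fromBlocks_multiply]
  simp only [← Matrix.mul_kronecker_mul, Matrix.mul_one, Matrix.mul_zero, Matrix.zero_mul,
    add_zero, zero_add, small_c', small_d', small_e', Matrix.zero_kronecker,
    Matrix.one_kronecker_one, TS_tp_mul]
  rw [← Matrix.add_kronecker, small_f', Matrix.one_kronecker_one, Matrix.fromBlocks_one]

/-! ### reversal -/

private lemma revMat_zero {m l : Type*} : revMat 1 (0 : Matrix m l F[X]) = 0 := by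
  ext i j; simp [revMat]

private lemma revMat_transpose {m l : Type*} (M : Matrix m l F[X]) :
    revMat 1 (Mᵀ) = (revMat 1 M)ᵀ := by
  ext i j; simp [revMat]

private lemma revMat_smul {m l : Type*} (a : F) (M : Matrix m l F[X]) :
    revMat 1 (a • M) = a • revMat 1 M := by
  ext i j
  simp [revMat, Matrix.smul_apply, Polynomial.smul_eq_C_mul, reflect_C_mul]

private lemma revMat_pencil {m l : Type*} (A B : Matrix m l F) :
    revMat 1 (pencil A B) = pencil B A := by
  ext i j
  simp only [revMat, pencil, matC, Matrix.map_apply, Matrix.add_apply, Matrix.smul_apply,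
    smul_eq_mul]
  rw [reflect_add, reflect_C, mul_comm (X : F[X]) (C (B i j)), reflect_C_mul, reflect_one_X]
  ring

private lemma revMat_LhatB : revMat 1 (LhatB F u n) = LhatRevB F u n := by
  have r1 : Polynomial.reflect 1 (-1 : F[X]) = -X := by
    rw [show (-1 : F[X]) = C (-1) by simp, reflect_C]
    simp
  ext ⟨i, r⟩ q
  rcases q with w | ⟨j, s⟩
  · simp [revMat, LhatB, LhatRevB]
  · by_cases h2 : r = s
    · subst h2
      by_cases ha : (j : ℕ) = (i : ℕ) <;> by_cases hb : (j : ℕ) = (i : ℕ) + 1 <;>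
        simp [revMat, LhatB, LhatRevB, Lpen, LpenR, Matrix.one_apply,
          ha, hb, r1]
    · simp [revMat, LhatB, LhatRevB, Lpen, LpenR, Matrix.one_apply, h2]

private lemma revMat_modBK (s : F)
    (A B : Matrix (Fin n ⊕ Fin (u+1) × Fin n) (Fin n ⊕ Fin (u+1) × Fin n) F) :
    revMat 1 (modBK F u n s (pencil A B)) =
      Matrix.fromBlocks (pencil B A) (LhatRevB F u n)ᵀ (s • LhatRevB F u n) 0 := by
  have h0 : revMat 1 (modBK F u n s (pencil A B)) =
      Matrix.fromBlocks (revMat 1 (pencil A B)) (revMat 1 ((LhatB F u n)ᵀ))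
        (revMat 1 (s • LhatB F u n)) (revMat 1 (0 : Matrix (Fin u × Fin n) (Fin u × Fin n) F[X])) := by
    unfold modBK revMat
    exact Matrix.fromBlocks_map _ _ _ _ _
  rw [h0, revMat_pencil, revMat_transpose, revMat_smul, revMat_LhatB, revMat_zero]

end AuxLin2
noncomputable section AuxLin3
open Polynomial Matrix
open scoped Kronecker

variable {F : Type} [Field F] {n u : ℕ}

private abbrev ρt (n : ℕ) := Fin 2 × Fin n
private abbrev κt (n u : ℕ) := Fin u × Fin n
private abbrev ιt (n u : ℕ) := Fin n ⊕ Fin (u+1) × Fin n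
private abbrev τt (n u : ℕ) := (ρt n ⊕ κt n u) ⊕ κt n u
private abbrev ωt (n u : ℕ) := ιt n u ⊕ κt n u

private lemma smul_fromCols {m n₁ n₂ : Type*} (a : F) (A : Matrix m n₁ F[X])
    (B : Matrix m n₂ F[X]) :
    a • Matrix.fromCols A B = Matrix.fromCols (a • A) (a • B) := by
  ext i j; cases j <;> simp

private lemma fromRows_add {m₁ m₂ l : Type*} (A C : Matrix m₁ l F[X]) (B D : Matrix m₂ l F[X]) :
    Matrix.fromRows A B + Matrix.fromRows C D = Matrix.fromRows (A + C) (B + D) := by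
  ext i j; cases i <;> simp

private lemma add_fromRows_fc {m₁ m₂ n₁ n₂ : Type*} (A : Matrix m₁ n₁ F[X])
    (B : Matrix m₁ n₂ F[X]) (C : Matrix m₂ n₁ F[X]) (D : Matrix m₂ n₂ F[X])
    (B' : Matrix m₁ n₂ F[X]) :
    Matrix.fromBlocks A B C D + Matrix.fromRows (Matrix.fromCols 0 B') 0 =
      Matrix.fromBlocks A (B + B') C D := by
  ext i j; cases i <;> cases j <;> simp

private lemma add_fromRows_bottom {m₁ m₂ n₁ n₂ : Type*} (A : Matrix m₁ n₁ F[X])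
    (B : Matrix m₁ n₂ F[X]) (C : Matrix m₂ n₁ F[X]) (D : Matrix m₂ n₂ F[X])
    (C' : Matrix m₂ n₁ F[X]) (D' : Matrix m₂ n₂ F[X]) :
    Matrix.fromBlocks A B C D + Matrix.fromRows 0 (Matrix.fromCols C' D') =
      Matrix.fromBlocks A B (C + C') (D + D') := by
  ext i j; cases i <;> cases j <;> simp

private lemma submul_left {l m p q : Type*} [Fintype m] (A : Matrix l m F[X])
    (B : Matrix m p F[X]) (f : q → l) :
    A.submatrix f _root_.id * B = (A * B).submatrix f _root_.id := by
  ext i j; simp [Matrix.mul_apply]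

private lemma submul_both {l m p q r : Type*} [Fintype m] (A : Matrix l m F[X])
    (B : Matrix m p F[X]) (f : q → l) (g : r → p) :
    A.submatrix f _root_.id * B.submatrix _root_.id g = (A * B).submatrix f g := by
  ext i j; simp [Matrix.mul_apply]

private lemma submul_right {l m p q : Type*} [Fintype m] (A : Matrix l m F[X])
    (B : Matrix m p F[X]) (f : q → p) :
    A * B.submatrix _root_.id f = (A * B).submatrix _root_.id f := by
  ext i j; simp [Matrix.mul_apply]

set_option maxHeartbeats 1000000 in
private lemma keyLin (σ ε : F) (hσ : σ * σ = 1) (hε : ε * ε = 1)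
    (M : Matrix (ιt n u) (ιt n u) F[X])
    (Λ : Matrix (ιt n u) (ρt n) F[X])
    (N E : Matrix (κt n u) (ιt n u) F[X])
    (J : Matrix (ιt n u) (ρt n ⊕ κt n u) F[X])
    (h1 : E * Λ = 0) (h2 : E * Nᵀ = ε • 1)
    (h3 : Matrix.fromRows Λᵀ N * J = 1) :
    IsLinearization ((2*(u+1)-2)*n) (Matrix.fromBlocks M Eᵀ (σ • E) 0) (Λᵀ * M * Λ) := by
  classical
  have hσε : (σ * ε) * (σ * ε) = 1 := by
    have hh : (σ * ε) * (σ * ε) = (σ * σ) * (ε * ε) := by ring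
    rw [hh, hσ, hε, one_mul]
  have hnegσε : (-(σ * ε)) * (σ * ε) = -1 := by rw [neg_mul, hσε]
  have hεn : ε * -ε = -1 := by rw [mul_neg, hε]
  have h1t : Λᵀ * Eᵀ = 0 := by
    have := congrArg Matrix.transpose h1
    simpa using this
  have h2t : N * Eᵀ = ε • 1 := by
    have := congrArg Matrix.transpose h2
    simpa using this
  have hJQ : Jᵀ * Matrix.fromCols Λ Nᵀ = 1 := by
    have hh := congrArg Matrix.transpose h3
    rw [Matrix.transpose_mul, Matrix.transpose_one, Matrix.transpose_fromRows,
      Matrix.transpose_transpose] at hh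
    exact hh
  -- index equivalences
  have hcard1 : Fintype.card (Fin ((2*(u+1)-2)*n)) =
      Fintype.card (κt n u ⊕ κt n u) := by
    simp only [Fintype.card_fin, Fintype.card_sum, Fintype.card_prod]
    have h2u : 2*(u+1)-2 = 2*u := by omega
    rw [h2u]; ring
  have hcard2 : Fintype.card (τt n u) = Fintype.card (ωt n u) := by
    simp only [Fintype.card_sum, Fintype.card_prod, Fintype.card_fin]
    ring
  let h : Fin ((2*(u+1)-2)*n) ≃ (κt n u ⊕ κt n u) := Fintype.equivOfCardEq hcard1
  let g : τt n u ≃ ωt n u := Fintype.equivOfCardEq hcard2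
  let ψ : ((κt n u ⊕ κt n u) ⊕ ρt n) ≃ τt n u :=
    (Equiv.sumComm _ _).trans (Equiv.sumAssoc _ _ _).symm
  -- matrices
  let K : Matrix (ρt n ⊕ κt n u) (ιt n u) F[X] := Matrix.fromRows Λᵀ N
  let Q : Matrix (ιt n u) (ρt n ⊕ κt n u) F[X] := Matrix.fromCols Λ Nᵀ
  let X₁ : Matrix (ρt n) (κt n u) F[X] := Λᵀ * M * Nᵀ
  let X₂ : Matrix (κt n u) (ρt n) F[X] := N * M * Λ
  let X₃ : Matrix (κt n u) (κt n u) F[X] := N * M * Nᵀ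
  let W : Matrix (τt n u) (ωt n u) F[X] := Matrix.fromBlocks K 0 0 1
  let W' : Matrix (ωt n u) (τt n u) F[X] := Matrix.fromBlocks Q 0 0 1
  let Winv : Matrix (ωt n u) (τt n u) F[X] := Matrix.fromBlocks J 0 0 1
  let W'inv : Matrix (τt n u) (ωt n u) F[X] := Matrix.fromBlocks Jᵀ 0 0 1
  let B1 : Matrix (ρt n ⊕ κt n u) (κt n u) F[X] :=
    Matrix.fromRows ((-(σ * ε)) • X₁) 0
  let B1' : Matrix (ρt n ⊕ κt n u) (κt n u) F[X] :=
    Matrix.fromRows ((σ * ε) • X₁) 0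
  let E1 : Matrix (τt n u) (τt n u) F[X] := Matrix.fromBlocks 1 B1 0 1
  let E1i : Matrix (τt n u) (τt n u) F[X] := Matrix.fromBlocks 1 B1' 0 1
  let G : Matrix (κt n u) (ρt n ⊕ κt n u) F[X] :=
    Matrix.fromCols ((-ε) • X₂) ((-ε) • X₃)
  let E3 : Matrix (τt n u) (τt n u) F[X] := Matrix.fromBlocks 1 0 G 1
  let E3i : Matrix (τt n u) (τt n u) F[X] := Matrix.fromBlocks 1 0 (-G) 1
  let E4 : Matrix (τt n u) (τt n u) F[X] :=
    Matrix.fromBlocks (Matrix.fromBlocks 1 0 0 0) (Matrix.fromRows 0 ((σ * ε) • 1))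
      (Matrix.fromCols 0 (ε • 1)) 0
  let E4i : Matrix (τt n u) (τt n u) F[X] :=
    Matrix.fromBlocks (Matrix.fromBlocks 1 0 0 0) (Matrix.fromRows 0 (ε • 1))
      (Matrix.fromCols 0 ((σ * ε) • 1)) 0
  have hKJ : K * J = 1 := h3
  have hJQ' : Jᵀ * Q = 1 := hJQ
  -- step computations
  have hKE : K * Eᵀ = Matrix.fromRows 0 (ε • 1) := by
    show Matrix.fromRows Λᵀ N * Eᵀ = _
    rw [Matrix.fromRows_mul, h1t, h2t]
  have hWL : W * Matrix.fromBlocks M Eᵀ (σ • E) 0 =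
      Matrix.fromBlocks (K * M) (Matrix.fromRows 0 (ε • 1)) (σ • E) 0 := by
    show Matrix.fromBlocks K 0 0 1 * Matrix.fromBlocks M Eᵀ (σ • E) 0 = _
    rw [Matrix.fromBlocks_multiply]
    simp only [Matrix.mul_zero, Matrix.zero_mul, Matrix.one_mul, Matrix.mul_one, add_zero,
      zero_add, hKE]
  have hKMQ : K * M * Q = Matrix.fromBlocks (Λᵀ * M * Λ) X₁ X₂ X₃ := by
    show Matrix.fromRows Λᵀ N * M * Matrix.fromCols Λ Nᵀ = _
    rw [Matrix.fromRows_mul, Matrix.fromRows_mul_fromCols]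
  have hEQ : (σ • E) * Q = Matrix.fromCols 0 ((σ * ε) • 1) := by
    show (σ • E) * Matrix.fromCols Λ Nᵀ = _
    rw [Matrix.smul_mul, Matrix.mul_fromCols, h1, h2, smul_fromCols, smul_smul, smul_zero]
  have hS1 : W * Matrix.fromBlocks M Eᵀ (σ • E) 0 * W' =
      Matrix.fromBlocks (Matrix.fromBlocks (Λᵀ * M * Λ) X₁ X₂ X₃)
        (Matrix.fromRows 0 (ε • 1)) (Matrix.fromCols 0 ((σ * ε) • 1)) 0 := by
    rw [hWL]
    show Matrix.fromBlocks (K * M) (Matrix.fromRows 0 (ε • 1)) (σ • E) 0 *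
      Matrix.fromBlocks Q 0 0 1 = _
    rw [Matrix.fromBlocks_multiply]
    simp only [Matrix.mul_zero, Matrix.zero_mul, Matrix.one_mul, Matrix.mul_one, add_zero,
      zero_add, hKMQ, hEQ]
  have hBC : B1 * Matrix.fromCols (0 : Matrix (κt n u) (ρt n) F[X]) ((σ * ε) • 1) =
      Matrix.fromRows (Matrix.fromCols 0 (-X₁)) 0 := by
    show Matrix.fromRows ((-(σ * ε)) • X₁) 0 *
      Matrix.fromCols (0 : Matrix (κt n u) (ρt n) F[X]) ((σ * ε) • 1) = _
    rw [Matrix.fromRows_mul, Matrix.zero_mul, Matrix.smul_mul, Matrix.mul_fromCols,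
      Matrix.mul_zero, Matrix.mul_smul, Matrix.mul_one, smul_fromCols, smul_zero,
      smul_smul, hnegσε, neg_one_smul]
  have hS2 : E1 * (W * Matrix.fromBlocks M Eᵀ (σ • E) 0 * W') =
      Matrix.fromBlocks (Matrix.fromBlocks (Λᵀ * M * Λ) 0 X₂ X₃)
        (Matrix.fromRows 0 (ε • 1)) (Matrix.fromCols 0 ((σ * ε) • 1)) 0 := by
    rw [hS1]
    show Matrix.fromBlocks 1 B1 0 1 * _ = _
    rw [Matrix.fromBlocks_multiply]
    simp only [Matrix.mul_zero, Matrix.zero_mul, Matrix.one_mul, Matrix.mul_one, add_zero,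
      zero_add, hBC]
    rw [add_fromRows_fc, add_neg_cancel]
  have hBG : Matrix.fromRows (0 : Matrix (ρt n) (κt n u) F[X]) (ε • 1) * G =
      Matrix.fromRows 0 (Matrix.fromCols (-X₂) (-X₃)) := by
    show Matrix.fromRows (0 : Matrix (ρt n) (κt n u) F[X]) (ε • 1) *
      Matrix.fromCols ((-ε) • X₂) ((-ε) • X₃) = _
    rw [Matrix.fromRows_mul, Matrix.zero_mul, Matrix.smul_mul, Matrix.one_mul,
      smul_fromCols, smul_smul, smul_smul, hεn, neg_one_smul, neg_one_smul]
  have hS3 : E1 * (W * Matrix.fromBlocks M Eᵀ (σ • E) 0 * W') * E3 =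
      Matrix.fromBlocks (Matrix.fromBlocks (Λᵀ * M * Λ) 0 0 0)
        (Matrix.fromRows 0 (ε • 1)) (Matrix.fromCols 0 ((σ * ε) • 1)) 0 := by
    rw [hS2]
    show _ * Matrix.fromBlocks 1 0 G 1 = _
    rw [Matrix.fromBlocks_multiply]
    simp only [Matrix.mul_zero, Matrix.zero_mul, Matrix.one_mul, Matrix.mul_one, add_zero,
      zero_add, hBG]
    rw [add_fromRows_bottom, add_neg_cancel, add_neg_cancel]
  have hBC4 : Matrix.fromRows (0 : Matrix (ρt n) (κt n u) F[X]) (ε • 1) *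
      Matrix.fromCols (0 : Matrix (κt n u) (ρt n) F[X])
        (ε • (1 : Matrix (κt n u) (κt n u) F[X])) =
      Matrix.fromRows (0 : Matrix (ρt n) (ρt n ⊕ κt n u) F[X])
        (Matrix.fromCols (0 : Matrix (κt n u) (ρt n) F[X]) 1) := by
    rw [Matrix.fromRows_mul, Matrix.zero_mul, Matrix.smul_mul, Matrix.one_mul,
      smul_fromCols, smul_zero, smul_smul, hε, one_smul]
  have hCB4 : Matrix.fromCols (0 : Matrix (κt n u) (ρt n) F[X])
      ((σ * ε) • (1 : Matrix (κt n u) (κt n u) F[X])) *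
      Matrix.fromRows (0 : Matrix (ρt n) (κt n u) F[X])
        ((σ * ε) • (1 : Matrix (κt n u) (κt n u) F[X])) = 1 := by
    rw [Matrix.fromCols_mul_fromRows, Matrix.zero_mul, zero_add, Matrix.smul_mul,
      Matrix.one_mul, smul_smul, hσε, one_smul]
  have hAA4 : Matrix.fromBlocks (Λᵀ * M * Λ) (0 : Matrix (ρt n) (κt n u) F[X])
      (0 : Matrix (κt n u) (ρt n) F[X]) (0 : Matrix (κt n u) (κt n u) F[X]) *
      Matrix.fromBlocks 1 0 0 0 = Matrix.fromBlocks (Λᵀ * M * Λ) 0 0 0 := by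
    rw [Matrix.fromBlocks_multiply]; simp
  have hAB4 : Matrix.fromBlocks (Λᵀ * M * Λ) (0 : Matrix (ρt n) (κt n u) F[X])
      (0 : Matrix (κt n u) (ρt n) F[X]) (0 : Matrix (κt n u) (κt n u) F[X]) *
      Matrix.fromRows (0 : Matrix (ρt n) (κt n u) F[X])
        ((σ * ε) • (1 : Matrix (κt n u) (κt n u) F[X])) = 0 := by
    rw [Matrix.fromBlocks_mul_fromRows]; simp
  have hCA4 : Matrix.fromCols (0 : Matrix (κt n u) (ρt n) F[X])
      ((σ * ε) • (1 : Matrix (κt n u) (κt n u) F[X])) *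
      Matrix.fromBlocks (1 : Matrix (ρt n) (ρt n) F[X]) 0 0
        (0 : Matrix (κt n u) (κt n u) F[X]) = 0 := by
    rw [Matrix.fromCols_mul_fromBlocks]; simp
  have hS4 : E1 * (W * Matrix.fromBlocks M Eᵀ (σ • E) 0 * W') * E3 * E4 =
      Matrix.fromBlocks (Matrix.fromBlocks (Λᵀ * M * Λ) 0 0 1) 0 0 1 := by
    rw [hS3]
    show _ * Matrix.fromBlocks (Matrix.fromBlocks 1 0 0 0) (Matrix.fromRows 0 ((σ * ε) • 1))
      (Matrix.fromCols 0 (ε • 1)) 0 = _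
    rw [Matrix.fromBlocks_multiply]
    simp only [Matrix.mul_zero, Matrix.zero_mul, add_zero, zero_add, hAA4, hAB4, hCA4, hCB4,
      hBC4]
    rw [add_fromRows_bottom, add_zero, zero_add]
  have hTot : (E1 * W) * Matrix.fromBlocks M Eᵀ (σ • E) 0 * (W' * (E3 * E4)) =
      Matrix.fromBlocks (Matrix.fromBlocks (Λᵀ * M * Λ) 0 0 1) 0 0 1 := by
    rw [show (E1 * W) * Matrix.fromBlocks M Eᵀ (σ • E) 0 * (W' * (E3 * E4)) =
      E1 * (W * Matrix.fromBlocks M Eᵀ (σ • E) 0 * W') * E3 * E4 by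
        simp only [Matrix.mul_assoc]]
    exact hS4
  -- inverses
  have hWWinv : W * Winv = 1 := by
    show Matrix.fromBlocks K 0 0 1 * Matrix.fromBlocks J 0 0 1 = 1
    rw [Matrix.fromBlocks_multiply]
    simp only [Matrix.mul_zero, Matrix.zero_mul, Matrix.one_mul, Matrix.mul_one, add_zero,
      zero_add, hKJ]
    exact Matrix.fromBlocks_one
  have hW'invW' : W'inv * W' = 1 := by
    show Matrix.fromBlocks Jᵀ 0 0 1 * Matrix.fromBlocks Q 0 0 1 = 1
    rw [Matrix.fromBlocks_multiply]
    simp only [Matrix.mul_zero, Matrix.zero_mul, Matrix.one_mul, Matrix.mul_one, add_zero,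
      zero_add, hJQ']
    exact Matrix.fromBlocks_one
  have hE1E1i : E1 * E1i = 1 := by
    show Matrix.fromBlocks 1 B1 0 1 * Matrix.fromBlocks 1 B1' 0 1 = 1
    rw [Matrix.fromBlocks_multiply]
    simp only [Matrix.mul_zero, Matrix.zero_mul, Matrix.one_mul, Matrix.mul_one, add_zero,
      zero_add]
    have hBB : B1' + B1 = 0 := by
      show Matrix.fromRows ((σ * ε) • X₁) 0 + Matrix.fromRows ((-(σ * ε)) • X₁) 0 = 0
      rw [fromRows_add, neg_smul, add_neg_cancel, add_zero, Matrix.fromRows_zero]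
    rw [hBB]
    exact Matrix.fromBlocks_one
  have hE3iE3 : E3i * E3 = 1 := by
    show Matrix.fromBlocks 1 0 (-G) 1 * Matrix.fromBlocks 1 0 G 1 = 1
    rw [Matrix.fromBlocks_multiply]
    simp only [Matrix.mul_zero, Matrix.zero_mul, Matrix.one_mul, Matrix.mul_one, add_zero,
      zero_add, neg_add_cancel]
    exact Matrix.fromBlocks_one
  have hE4iE4 : E4i * E4 = 1 := by
    show Matrix.fromBlocks (Matrix.fromBlocks 1 0 0 0) (Matrix.fromRows 0 (ε • 1))
        (Matrix.fromCols 0 ((σ * ε) • 1)) 0 *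
      Matrix.fromBlocks (Matrix.fromBlocks 1 0 0 0) (Matrix.fromRows 0 ((σ * ε) • 1))
        (Matrix.fromCols 0 (ε • 1)) 0 = 1
    rw [Matrix.fromBlocks_multiply]
    have c11a : (Matrix.fromBlocks 1 0 0 0 : Matrix (ρt n ⊕ κt n u) (ρt n ⊕ κt n u) F[X]) *
        Matrix.fromBlocks 1 0 0 0 = Matrix.fromBlocks 1 0 0 0 := by
      rw [Matrix.fromBlocks_multiply]; simp
    have c12 : (Matrix.fromBlocks 1 0 0 0 : Matrix (ρt n ⊕ κt n u) (ρt n ⊕ κt n u) F[X]) *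
        Matrix.fromRows (0 : Matrix (ρt n) (κt n u) F[X])
          ((σ * ε) • (1 : Matrix (κt n u) (κt n u) F[X])) = 0 := by
      rw [Matrix.fromBlocks_mul_fromRows]; simp
    have c21 : Matrix.fromCols (0 : Matrix (κt n u) (ρt n) F[X])
        ((σ * ε) • (1 : Matrix (κt n u) (κt n u) F[X])) *
        Matrix.fromBlocks (1 : Matrix (ρt n) (ρt n) F[X]) 0 0
          (0 : Matrix (κt n u) (κt n u) F[X]) = 0 := by
      rw [Matrix.fromCols_mul_fromBlocks]; simp
    simp only [Matrix.mul_zero, Matrix.zero_mul, add_zero, zero_add, c11a, c12, c21, hCB4,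
      hBC4]
    rw [add_fromRows_bottom, add_zero, zero_add, Matrix.fromBlocks_one, Matrix.fromBlocks_one]
  -- assemble
  refine ⟨((h.sumCongr (Equiv.refl (ρt n))).trans ψ).trans g,
    (E1 * W).submatrix ⇑g.symm _root_.id,
    (W' * (E3 * E4)).submatrix _root_.id ⇑g.symm, ?_, ?_, ?_⟩
  · -- IsUnit det U
    have hinv : (E1 * W).submatrix ⇑g.symm _root_.id *
        ((Winv * E1i).submatrix _root_.id ⇑g.symm) = 1 := by
      rw [submul_both]
      rw [show (E1 * W) * (Winv * E1i) = E1 * (W * Winv) * E1i by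
        simp only [Matrix.mul_assoc], hWWinv, Matrix.mul_one, hE1E1i]
      exact Matrix.submatrix_one_equiv g.symm
    exact Matrix.isUnit_det_of_right_inverse hinv
  · -- IsUnit det V
    have hinv : ((E4i * (E3i * W'inv)).submatrix ⇑g.symm _root_.id) *
        (W' * (E3 * E4)).submatrix _root_.id ⇑g.symm = 1 := by
      rw [submul_both]
      have hA : (E4i * (E3i * W'inv)) * (W' * (E3 * E4)) = 1 := by
        rw [show (E4i * (E3i * W'inv)) * (W' * (E3 * E4)) =
          E4i * (E3i * (W'inv * (W' * (E3 * E4)))) by simp only [Matrix.mul_assoc]]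
        rw [show W'inv * (W' * (E3 * E4)) = (W'inv * W') * (E3 * E4) from
          (Matrix.mul_assoc _ _ _).symm, hW'invW', Matrix.one_mul]
        rw [show E3i * (E3 * E4) = (E3i * E3) * E4 from (Matrix.mul_assoc _ _ _).symm,
          hE3iE3, Matrix.one_mul, hE4iE4]
      rw [hA]
      exact Matrix.submatrix_one_equiv g.symm
    exact Matrix.isUnit_det_of_left_inverse hinv
  · -- the defining identity
    have hsub : (E1 * W).submatrix ⇑g.symm _root_.id * Matrix.fromBlocks M Eᵀ (σ • E) 0 *
        (W' * (E3 * E4)).submatrix _root_.id ⇑g.symm =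
        (Matrix.fromBlocks (Matrix.fromBlocks (Λᵀ * M * Λ) 0 0 1) 0 0 1).submatrix
          ⇑g.symm ⇑g.symm := by
      rw [submul_left, submul_both, hTot]
    rw [hsub]
    have hψ1 : ∀ r : ρt n, ψ.symm (Sum.inl (Sum.inl r)) = Sum.inr r := fun _ => rfl
    have hψ2 : ∀ k : κt n u, ψ.symm (Sum.inl (Sum.inr k)) = Sum.inl (Sum.inl k) :=
      fun _ => rfl
    have hψ3 : ∀ k : κt n u, ψ.symm (Sum.inr k) = Sum.inl (Sum.inr k) := fun _ => rfl
    have hsc1 : ∀ kk : κt n u ⊕ κt n u,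
        (h.sumCongr (Equiv.refl (ρt n))).symm (Sum.inl kk) = Sum.inl (h.symm kk) :=
      fun _ => rfl
    have hsc2 : ∀ r : ρt n,
        (h.sumCongr (Equiv.refl (ρt n))).symm (Sum.inr r) = Sum.inr r := fun _ => rfl
    ext x y
    simp only [Matrix.submatrix_apply, Equiv.symm_trans_apply]
    generalize g.symm x = a
    generalize g.symm y = b
    rcases a with (r | k) | k <;> rcases b with (r' | k') | k' <;>
      simp [hψ1, hψ2, hψ3, hsc1, hsc2, Matrix.one_apply,
        EmbeddingLike.apply_eq_iff_eq]

end AuxLin3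

/-- (`t = u+1 ≥ 2`.) Every modified block Kronecker pencil `L(λ)` is a
linearization of `P(λ) = (Λ̂_t(λ)ᵀ⊗I_n)(λB+A)(Λ̂_t(λ)⊗I_n)`, and `rev_1 L(λ)` is a
linearization of `P̃(λ) = (Λ̃_t(λ)ᵀ⊗I_n)(λA+B)(Λ̃_t(λ)⊗I_n)`. -/
theorem stmt_7 {F : Type} [Field F] (n u : ℕ) (hn : 0 < n) (hu : 1 ≤ u)
    (σ : F) (hσ : σ = 1 ∨ σ = -1)
    (A B : Matrix (Fin n ⊕ Fin (u+1) × Fin n) (Fin n ⊕ Fin (u+1) × Fin n) F) :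
    IsLinearization ((2*(u+1) - 2)*n) (modBK F u n σ (pencil A B))
        ((LamHatB F u n)ᵀ * pencil A B * LamHatB F u n) ∧
      IsLinearization ((2*(u+1) - 2)*n) (revMat 1 (modBK F u n σ (pencil A B)))
        ((LamTildeB F u n)ᵀ * pencil B A * LamTildeB F u n) := by
  have hσ2 : σ * σ = 1 := by rcases hσ with h | h <;> rw [h] <;> ring
  constructor
  · have hk := keyLin (n := n) (u := u) σ (-1 : F) hσ2 (by ring)
      (pencil A B) (LamHatB F u n) (NhatB F u n) (LhatB F u n) (JhatB F u n)
      hEL_hat hEN_hat hKJ_hat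
    exact hk
  · have hk := keyLin (n := n) (u := u) σ (1 : F) hσ2 (by ring)
      (pencil B A) (LamTildeB F u n) (NtildeB F u n) (LhatRevB F u n) (JtildeB F u n)
      hEL_tilde hEN_tilde hKJ_tilde
    rw [revMat_modBK]
    exact hk
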